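/- If ρ is a partial assignment fixing n₁ text variables and k₁ pattern variables that forces SM_{n,k}(x,y) = 0, and k ≤ √(n-k+1), then n₁ + k₁ ≥ k + (n-k+1)/k. -/

import Mathlib

/-- `y` occurs as a contiguous substring of `x`. -/
def occursIn {n k : ℕ} (x : Fin n → Bool) (y : Fin k → Bool) : Prop :=
  ∃ i, ∃ _ : i + k ≤ n, ∀ t : Fin k, x ⟨i + t.val, by have := t.isLt; omega⟩ = y t

/-- If a partial assignment fixing `n₁` text variables and `k₁` pattern
variables forces `SM_{n,k}(x,y) = 0`, and `k ≤ √(n-k+1)`, then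
`n₁ + k₁ ≥ k + (n-k+1)/k`. -/
theorem maxterm_width_small_k (n k : ℕ) (hk : 1 ≤ k) (hkn : k ≤ n)
    (hsmall : (k : ℝ) ≤ Real.sqrt ((n : ℝ) - k + 1))
    (ρx : Fin n → Option Bool) (ρy : Fin k → Option Bool)
    (hforce : ∀ (x : Fin n → Bool) (y : Fin k → Bool),
      (∀ i b, ρx i = some b → x i = b) →
      (∀ j b, ρy j = some b → y j = b) →
      ¬ occursIn x y) :
    (k : ℝ) + ((n : ℝ) - k + 1) / k ≤
      (((Finset.univ.filter fun i => (ρx i).isSome = true).card : ℝ) +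
        ((Finset.univ.filter fun j => (ρy j).isSome = true).card : ℝ)) := by
  classical
  set n₁ := (Finset.univ.filter fun i => (ρx i).isSome = true).card with hn₁
  set k₁ := (Finset.univ.filter fun j => (ρy j).isSome = true).card with hk₁def
  -- Step 1: every window is blocked by a pair of fixed variables
  have hblock : ∀ i : ℕ, ∀ hi : i + k ≤ n,
      ∃ t : Fin k, (ρy t).isSome ∧ (ρx ⟨i + t.val, by have := t.isLt; omega⟩).isSome := by
    intro i hi
    by_contra hcon
    push_neg at hcon
    set y : Fin k → Bool :=
      fun t => (ρy t).getD ((ρx ⟨i + t.val, by have := t.isLt; omega⟩).getD true) with hy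
    set x : Fin n → Bool := fun p =>
      match ρx p with
      | some b => b
      | none => if h : i ≤ p.val ∧ p.val < i + k then y ⟨p.val - i, by omega⟩ else true
      with hx
    refine hforce x y ?_ ?_ ⟨i, hi, ?_⟩
    · intro p b h
      simp [hx, h]
    · intro j b h
      simp [hy, h]
    · intro t
      have ht := t.isLt
      cases hρ : ρx ⟨i + t.val, by omega⟩ with
      | some b =>
          have h2 : ρy t = none := by
            have := hcon t
            cases h3 : ρy t with
            | none => rfl
            | some b' =>
                exfalso
                apply this
                · simp [h3]
                · simp [hρ]
          simp [hx, hy, hρ, h2]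
      | none =>
          have h1 : i ≤ i + t.val ∧ i + t.val < i + k := by omega
          have h2 : (⟨i + t.val - i, by omega⟩ : Fin k) = t := by
            apply Fin.ext; simp
          simp [hx, hρ, h1, h2]
  -- Step 2: counting, n - k + 1 ≤ n₁ * k₁
  have hcard : n - k + 1 ≤ n₁ * k₁ := by
    have hle := Finset.card_le_card_of_injOn
      (f := fun i : ℕ =>
        if h : i + k ≤ n then
          (((⟨i + ((hblock i h).choose).val,
              by have := ((hblock i h).choose).isLt; omega⟩ : Fin n),
            (hblock i h).choose) : Fin n × Fin k)
        else (⟨0, by omega⟩, ⟨0, by omega⟩))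
      (s := Finset.range (n - k + 1))
      (t := (Finset.univ.filter fun i => (ρx i).isSome) ×ˢ
            (Finset.univ.filter fun j => (ρy j).isSome))
      (by
        intro i hi
        simp only [Finset.mem_coe, Finset.mem_range] at hi
        have h : i + k ≤ n := by omega
        simp only [dif_pos h]
        obtain ⟨h1, h2⟩ := (hblock i h).choose_spec
        simp only [Finset.mem_coe, Finset.mem_product, Finset.mem_filter, Finset.mem_univ, true_and]
        exact ⟨h2, h1⟩)
      (by
        intro a ha b hb hab
        simp only [Finset.mem_coe, Finset.mem_range] at ha hb
        have h1 : a + k ≤ n := by omega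
        have h2 : b + k ≤ n := by omega
        simp only [dif_pos h1, dif_pos h2] at hab
        have ht : (hblock a h1).choose = (hblock b h2).choose :=
          congrArg Prod.snd hab
        have hfst := congrArg Prod.fst hab
        have hval : a + ((hblock a h1).choose).val = b + ((hblock b h2).choose).val :=
          congrArg Fin.val hfst
        rw [ht] at hval
        omega)
    rw [Finset.card_product] at hle
    simpa [hn₁, hk₁def] using hle
  have hk₁le : k₁ ≤ k := by
    have := Finset.card_filter_le (Finset.univ : Finset (Fin k))
      (fun j => (ρy j).isSome = true)
    simpa [hk₁def] using this
  have hk₁pos : 1 ≤ k₁ := by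
    rcases Nat.eq_zero_or_pos k₁ with h | h
    · rw [h, Nat.mul_zero] at hcard; omega
    · exact h
  -- Step 3: real arithmetic
  have hNcast : ((n : ℝ) - k + 1) = ((n - k + 1 : ℕ) : ℝ) := by
    have := hkn
    push_cast [Nat.cast_sub hkn]
    ring
  set N : ℝ := (n : ℝ) - k + 1 with hN
  have hN0 : 0 ≤ N := by rw [hNcast]; positivity
  have hK1 : (1 : ℝ) ≤ (k : ℝ) := by exact_mod_cast hk
  have hKpos : (0 : ℝ) < (k : ℝ) := by linarith
  have hK2 : (k : ℝ) * k ≤ N := by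
    have := Real.mul_self_sqrt hN0
    nlinarith [Real.sqrt_nonneg N, hsmall]
  have hNn : N ≤ (n₁ : ℝ) * k₁ := by
    rw [hNcast]
    exact_mod_cast hcard
  have hk₁K : (k₁ : ℝ) ≤ (k : ℝ) := by exact_mod_cast hk₁le
  have hk₁1 : (1 : ℝ) ≤ (k₁ : ℝ) := by exact_mod_cast hk₁pos
  have hNKk : (k : ℝ) * k₁ ≤ N :=
    le_trans (mul_le_mul_of_nonneg_left hk₁K hKpos.le) hK2
  have hprod : 0 ≤ ((k : ℝ) - k₁) * (N - (k : ℝ) * k₁) :=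
    mul_nonneg (by linarith) (by linarith)
  have hdiv : N / (k : ℝ) ≤ (n₁ : ℝ) + (k₁ : ℝ) - k := by
    rw [div_le_iff₀ hKpos]
    nlinarith [hprod, mul_le_mul_of_nonneg_right hNn hKpos.le, hk₁1]
  linarith
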